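/- Let k ≥ 1 be an integer and let (Q, ≤) be a preorder that is a well-quasi-ordering, i.e., for every sequence q_0, q_1, q_2, … in Q there exist indices i < j with q_i ≤ q_j. Then for every sequence (G_0, f_0), (G_1, f_1), (G_2, f_2), … in which each G_n is a finite simple graph containing no path on k vertices as a subgraph and each f_n maps V(G_n) to Q, there exist indices i < j and an injective map σ : V(G_i) → V(G_j) such that uv is an edge of G_i if and only if σ(u)σ(v) is an edge of G_j, and f_i(v) ≤ f_j(σ(v)) for every vertex v of G_i. -/

import Mathlib

namespace PFW

inductive T (α : Type*) : Type _
  | node (a : α) (cs : List (T α)) : T α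

namespace T
variable {α : Type*} {r : α → α → Prop}

inductive TE (r : α → α → Prop) : T α → T α → Prop
  | node {a b : α} {cs ds : List (T α)} :
      r a b → List.SublistForall₂ (TE r) cs ds → TE r (node a cs) (node b ds)

/-- Trees of height ≤ h with all labels in s. -/
inductive Bd (s : Set α) : ℕ → T α → Prop
  | node {a : α} {cs : List (T α)} {h : ℕ} :
      a ∈ s → (∀ t ∈ cs, Bd s h t) → Bd s (h + 1) (node a cs)

mutual
theorem TE_refl (hr : ∀ x : α, r x x) : ∀ t : T α, TE r t t
  | .node a cs => .node (hr a) (TE_reflF hr cs)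
theorem TE_reflF (hr : ∀ x : α, r x x) : ∀ ts : List (T α), List.SublistForall₂ (TE r) ts ts
  | [] => .nil
  | t :: ts => .cons (TE_refl hr t) (TE_reflF hr ts)
end

mutual
theorem TE_trans (hr : ∀ x y z : α, r x y → r y z → r x z) :
    ∀ {t u v : T α}, TE r t u → TE r u v → TE r t v
  | .node a cs, .node b ds, .node c es, .node h1 h2, .node h3 h4 =>
    .node (hr a b c h1 h3) (TE_transF hr h2 h4)
theorem TE_transF (hr : ∀ x y z : α, r x y → r y z → r x z) :
    ∀ {ts us vs : List (T α)}, List.SublistForall₂ (TE r) ts us →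
      List.SublistForall₂ (TE r) us vs → List.SublistForall₂ (TE r) ts vs
  | _, _, _, .nil, _ => .nil
  | _, _, _, h, .cons_right h2 => .cons_right (TE_transF hr h h2)
  | _, _, _, .cons h1 h2, .cons h3 h4 => .cons (TE_trans hr h1 h3) (TE_transF hr h2 h4)
  | _, _, _, .cons_right h2, .cons _ h4 => .cons_right (TE_transF hr h2 h4)
end

theorem Bd.mono {s : Set α} {h h' : ℕ} {t : T α} (hb : Bd s h t) (hh : h ≤ h') : Bd s h' t := by
  induction hb generalizing h' with
  | @node a cs h ha hcs ih =>
      obtain ⟨h'', rfl⟩ : ∃ h'', h' = h'' + 1 :=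
        ⟨h' - 1, by omega⟩
      exact Bd.node ha fun t ht => ih t ht (by omega)

theorem pwo_Bd {s : Set α} (hrefl : ∀ x : α, r x x)
    (htrans : ∀ x y z : α, r x y → r y z → r x z)
    (hs : s.PartiallyWellOrderedOn r) :
    ∀ h : ℕ, {t : T α | Bd s h t}.PartiallyWellOrderedOn (TE r) := by
  haveI : IsRefl α r := ⟨hrefl⟩
  haveI : IsTrans α r := ⟨fun a b c => htrans a b c⟩
  haveI : IsRefl (T α) (TE r) := ⟨TE_refl hrefl⟩
  haveI : IsTrans (T α) (TE r) := ⟨fun _ _ _ => TE_trans htrans⟩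
  haveI : IsPreorder α r := { refl := hrefl, trans := fun a b c => htrans a b c }
  haveI : IsPreorder (T α) (TE r) := { refl := TE_refl hrefl, trans := fun _ _ _ => TE_trans htrans }
  intro h
  induction h with
  | zero =>
      rw [Set.partiallyWellOrderedOn_iff_exists_lt]
      intro f hf
      exact absurd (hf 0) (by intro h; cases h)
  | succ h ih =>
      have hL := ih.partiallyWellOrderedOn_sublistForall₂ (r := TE r)
      have hprod := hs.prod hL
      rw [Set.partiallyWellOrderedOn_iff_exists_lt]
      intro f hf
      have hdec : ∀ n, ∃ a cs, f n = T.node a cs ∧ a ∈ s ∧ ∀ t ∈ cs, Bd s h t := by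
        intro n
        cases hfn : f n with
        | node a cs =>
          have := hf n
          rw [hfn] at this
          cases this with
          | node ha hcs => exact ⟨a, cs, rfl, ha, hcs⟩
      choose a cs hfn ha hcs using hdec
      obtain ⟨m, n, hmn, hr1, hr2⟩ := hprod.exists_lt (f := fun n => (a n, cs n))
        (fun n => ⟨ha n, fun t ht => hcs n t ht⟩)
      refine ⟨m, n, hmn, ?_⟩
      rw [hfn m, hfn n]
      exact TE.node hr1 hr2



mutual
/-- Label at an address inside a tree ([] = root). -/
def labT : T α → List ℕ → Option α
  | .node a _, [] => some a
  | .node _ cs, i :: l => labF cs i l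
/-- Label at index i, then address l, in a forest. -/
def labF : List (T α) → ℕ → List ℕ → Option α
  | [], _, _ => none
  | t :: _, 0, l => labT t l
  | _ :: ts, i + 1, l => labF ts i l
end

/-- Label at an address in a forest (addresses are nonempty lists). -/
def labFA (ts : List (T α)) : List ℕ → Option α
  | [] => none
  | i :: l => labF ts i l

@[simp] theorem labFA_nil_addr (ts : List (T α)) : labFA ts [] = none := rfl
@[simp] theorem labFA_nil (l : List ℕ) : labFA ([] : List (T α)) l = none := by
  cases l <;> rfl
@[simp] theorem labFA_cons_zero (t : T α) (ts : List (T α)) (l : List ℕ) :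
    labFA (t :: ts) (0 :: l) = labT t l := rfl
@[simp] theorem labFA_cons_succ (t : T α) (ts : List (T α)) (i : ℕ) (l : List ℕ) :
    labFA (t :: ts) ((i + 1) :: l) = labFA ts (i :: l) := rfl
@[simp] theorem labT_node_nil (a : α) (cs : List (T α)) : labT (node a cs) [] = some a := rfl
@[simp] theorem labT_node_cons (a : α) (cs : List (T α)) (i : ℕ) (l : List ℕ) :
    labT (node a cs) (i :: l) = labFA cs (i :: l) := rfl

/-- shift head index by one -/
def shiftHead : List ℕ → List ℕ
  | [] => []
  | i :: l => (i + 1) :: l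

@[simp] theorem shiftHead_cons (i : ℕ) (l : List ℕ) : shiftHead (i :: l) = (i + 1) :: l := rfl
@[simp] theorem shiftHead_length (l : List ℕ) : (shiftHead l).length = l.length := by
  cases l <;> rfl

theorem shiftHead_prefix_iff {l l' : List ℕ} (hl : l ≠ []) (hl' : l' ≠ []) :
    (shiftHead l <+: shiftHead l') ↔ (l <+: l') := by
  cases l with
  | nil => simp at hl
  | cons i m =>
    cases l' with
    | nil => simp at hl'
    | cons j m' =>
      simp only [shiftHead_cons, List.cons_prefix_cons]
      constructor
      · rintro ⟨h1, h2⟩; exact ⟨by omega, h2⟩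
      · rintro ⟨h1, h2⟩; exact ⟨by omega, h2⟩

/-- Good embedding on addresses, forest version. -/
def GoodF (ts us : List (T α)) (r : α → α → Prop) (θ : List ℕ → List ℕ) : Prop :=
  (∀ l, (labFA ts l).isSome → (labFA us (θ l)).isSome) ∧
  (∀ l, (labFA ts l).isSome → (θ l).length = l.length) ∧
  (∀ l l', (labFA ts l).isSome → (labFA ts l').isSome → (l <+: l' ↔ θ l <+: θ l')) ∧
  (∀ l x y, labFA ts l = some x → labFA us (θ l) = some y → r x y)

def GoodT (t u : T α) (r : α → α → Prop) (θ : List ℕ → List ℕ) : Prop :=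
  (∀ l, (labT t l).isSome → (labT u (θ l)).isSome) ∧
  (∀ l, (labT t l).isSome → (θ l).length = l.length) ∧
  (∀ l l', (labT t l).isSome → (labT t l').isSome → (l <+: l' ↔ θ l <+: θ l')) ∧
  (∀ l x y, labT t l = some x → labT u (θ l) = some y → r x y)

theorem labFA_addr_ne_nil {ts : List (T α)} {l : List ℕ} (h : (labFA ts l).isSome) : l ≠ [] := by
  rintro rfl; simp at h

end T
end PFW

namespace PFW
namespace T
variable {α : Type*} {r : α → α → Prop}

/-- address map for a tree embedding, from the forest map of children -/
def mapT (θf : List ℕ → List ℕ) : List ℕ → List ℕ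
  | [] => []
  | i :: m => θf (i :: m)

@[simp] theorem mapT_nil (θf) : mapT θf [] = [] := rfl
@[simp] theorem mapT_cons (θf) (i : ℕ) (m : List ℕ) : mapT θf (i :: m) = θf (i :: m) := rfl

/-- address map for a forest embedding (cons case). -/
def mapF (θt θf : List ℕ → List ℕ) : List ℕ → List ℕ
  | [] => []
  | 0 :: m => 0 :: θt m
  | (i + 1) :: m => shiftHead (θf (i :: m))

@[simp] theorem mapF_zero (θt θf) (m : List ℕ) : mapF θt θf (0 :: m) = 0 :: θt m := rfl
@[simp] theorem mapF_succ (θt θf) (i : ℕ) (m : List ℕ) :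
    mapF θt θf ((i + 1) :: m) = shiftHead (θf (i :: m)) := rfl

theorem exists_cons_of_valid {us : List (T α)} {l : List ℕ}
    (h : (labFA us l).isSome) : ∃ j m', l = j :: m' := by
  cases l with
  | nil => simp at h
  | cons j m' => exact ⟨j, m', rfl⟩

mutual
theorem emb_of_TE : ∀ {t u : T α}, TE r t u → ∃ θ, GoodT t u r θ
  | .node a cs, .node b ds, .node h1 h2 => by
    obtain ⟨θf, hf1, hf2, hf3, hf4⟩ := emb_of_SF h2
    refine ⟨mapT θf, ?_, ?_, ?_, ?_⟩
    · intro l hl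
      match l with
      | [] => simp
      | i :: m =>
        simp only [labT_node_cons] at hl ⊢
        have h := hf1 _ hl
        obtain ⟨j, m', hjm⟩ := exists_cons_of_valid h
        rw [mapT_cons, hjm]
        rw [hjm] at h
        simpa using h
    · intro l hl
      match l with
      | [] => rfl
      | i :: m => exact hf2 _ (by simpa using hl)
    · intro l l' hl hl'
      match l, l' with
      | [], l' => simp
      | i :: m, [] =>
        simp only [labT_node_cons] at hl
        have h := hf1 _ hl
        obtain ⟨j, m', hjm⟩ := exists_cons_of_valid h
        simp [hjm]
      | i :: m, j :: m' =>
        simp only [labT_node_cons] at hl hl'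
        simpa using hf3 _ _ hl hl'
    · intro l x y hx hy
      match l with
      | [] =>
        simp only [labT_node_nil, mapT_nil, Option.some.injEq] at hx hy
        rw [← hx, ← hy]; exact h1
      | i :: m =>
        simp only [labT_node_cons] at hx
        have h := hf1 _ (by rw [hx]; rfl)
        obtain ⟨j, m', hjm⟩ := exists_cons_of_valid h
        rw [mapT_cons, hjm, labT_node_cons] at hy
        exact hf4 _ _ _ hx (by rw [hjm]; exact hy)

theorem emb_of_SF : ∀ {ts us : List (T α)}, List.SublistForall₂ (TE r) ts us →
    ∃ θ, GoodF ts us r θ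
  | _, us, .nil => by
    refine ⟨id, ?_, ?_, ?_, ?_⟩ <;> intro l <;> simp
  | t :: ts, u :: us, .cons h1 h2 => by
    obtain ⟨θt, ht1, ht2, ht3, ht4⟩ := emb_of_TE h1
    obtain ⟨θf, hf1, hf2, hf3, hf4⟩ := emb_of_SF h2
    refine ⟨mapF θt θf, ?_, ?_, ?_, ?_⟩
    · intro l hl
      match l with
      | [] => simp at hl
      | 0 :: m =>
        simp only [labFA_cons_zero] at hl ⊢
        simpa using ht1 _ hl
      | (i + 1) :: m =>
        simp only [labFA_cons_succ] at hl
        have h := hf1 _ hl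
        obtain ⟨j, m', hjm⟩ := exists_cons_of_valid h
        rw [mapF_succ, hjm]
        rw [hjm] at h
        simpa using h
    · intro l hl
      match l with
      | [] => simp at hl
      | 0 :: m =>
        simp only [labFA_cons_zero] at hl
        simp [ht2 _ hl]
      | (i + 1) :: m =>
        simp only [labFA_cons_succ] at hl
        rw [mapF_succ, shiftHead_length, hf2 _ hl]
        simp
    · intro l l' hl hl'
      match l, l' with
      | [], _ => simp at hl
      | _, [] => simp at hl'
      | 0 :: m, 0 :: m' =>
        simp only [labFA_cons_zero] at hl hl'
        simp only [mapF_zero, List.cons_prefix_cons, true_and]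
        exact ht3 _ _ hl hl'
      | 0 :: m, (i + 1) :: m' =>
        simp only [labFA_cons_zero, labFA_cons_succ] at hl hl'
        have h := hf1 _ hl'
        obtain ⟨j, n', hjm⟩ := exists_cons_of_valid h
        rw [mapF_zero, mapF_succ, hjm]
        simp [List.cons_prefix_cons]
      | (i + 1) :: m, 0 :: m' =>
        simp only [labFA_cons_zero, labFA_cons_succ] at hl hl'
        have h := hf1 _ hl
        obtain ⟨j, n', hjm⟩ := exists_cons_of_valid h
        rw [mapF_zero, mapF_succ, hjm]
        simp [List.cons_prefix_cons]
      | (i + 1) :: m, (i' + 1) :: m' =>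
        simp only [labFA_cons_succ] at hl hl'
        have key := hf3 _ _ hl hl'
        have h := hf1 _ hl
        have h' := hf1 _ hl'
        have hne : θf (i :: m) ≠ [] := by
          intro hc; rw [hc] at h; simp at h
        have hne' : θf (i' :: m') ≠ [] := by
          intro hc; rw [hc] at h'; simp at h'
        rw [mapF_succ, mapF_succ, shiftHead_prefix_iff hne hne', ← key]
        simp [List.cons_prefix_cons]
    · intro l x y hx hy
      match l with
      | [] => simp at hx
      | 0 :: m =>
        simp only [labFA_cons_zero, mapF_zero] at hx hy
        exact ht4 _ _ _ hx (by simpa using hy)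
      | (i + 1) :: m =>
        simp only [labFA_cons_succ] at hx
        have h := hf1 _ (by rw [hx]; rfl)
        obtain ⟨j, m', hjm⟩ := exists_cons_of_valid h
        rw [mapF_succ, hjm, shiftHead_cons, labFA_cons_succ] at hy
        exact hf4 _ _ _ hx (by rw [hjm]; exact hy)
  | ts, u :: us, .cons_right h2 => by
    obtain ⟨θf, hf1, hf2, hf3, hf4⟩ := emb_of_SF h2
    refine ⟨fun l => shiftHead (θf l), ?_, ?_, ?_, ?_⟩
    · intro l hl
      have h := hf1 _ hl
      obtain ⟨j, m', hjm⟩ := exists_cons_of_valid h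
      show (labFA (u :: us) (shiftHead (θf l))).isSome
      rw [hjm, shiftHead_cons, labFA_cons_succ]
      rw [hjm] at h; exact h
    · intro l hl
      show (shiftHead (θf l)).length = l.length
      rw [shiftHead_length]; exact hf2 _ hl
    · intro l l' hl hl'
      have h := hf1 _ hl
      have h' := hf1 _ hl'
      have hne : θf l ≠ [] := by intro hc; rw [hc] at h; simp at h
      have hne' : θf l' ≠ [] := by intro hc; rw [hc] at h'; simp at h'
      show _ ↔ shiftHead (θf l) <+: shiftHead (θf l')
      rw [shiftHead_prefix_iff hne hne']
      exact hf3 _ _ hl hl'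
    · intro l x y hx hy
      have h := hf1 _ (by rw [hx]; rfl)
      obtain ⟨j, m', hjm⟩ := exists_cons_of_valid h
      rw [show (fun l => shiftHead (θf l)) l = shiftHead (θf l) from rfl,
        hjm, shiftHead_cons, labFA_cons_succ] at hy
      exact hf4 _ _ _ hx (by rw [hjm]; exact hy)
end

end T
end PFW

open SimpleGraph
namespace PFW
open T

variable {Q : Type} [Preorder Q]

/-- order on labels: Q component ≤, Finset component =. -/
def rQ (Q : Type) [Preorder Q] : (Q × Finset ℕ) → (Q × Finset ℕ) → Prop :=
  fun x y => x.1 ≤ y.1 ∧ x.2 = y.2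

def sK (Q : Type) (K : ℕ) : Set (Q × Finset ℕ) := {x | x.2 ⊆ Finset.range K}

theorem rQ_refl : ∀ x : Q × Finset ℕ, rQ Q x x := fun x => ⟨le_refl _, rfl⟩
theorem rQ_trans : ∀ x y z : Q × Finset ℕ, rQ Q x y → rQ Q y z → rQ Q x z :=
  fun _ _ _ h1 h2 => ⟨le_trans h1.1 h2.1, h1.2.trans h2.2⟩

theorem pwo_sK (hQ : ∀ q : ℕ → Q, ∃ i j : ℕ, i < j ∧ q i ≤ q j) (K : ℕ) :
    (sK Q K).PartiallyWellOrderedOn (rQ Q) := by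
  rw [Set.partiallyWellOrderedOn_iff_exists_lt]
  intro f hf
  have hQpwo : (Set.univ : Set Q).PartiallyWellOrderedOn (· ≤ ·) := Set.partiallyWellOrderedOn_iff_exists_lt.mpr fun g _ => hQ g
  obtain ⟨g, hg⟩ := hQpwo.exists_monotone_subseq (f := fun n => (f n).1) (fun _ => Set.mem_univ _)
  set ψ : ℕ → Finset (Fin K) := fun n =>
    Finset.univ.filter (fun i : Fin K => (i : ℕ) ∈ (f (g n)).2) with hψ
  obtain ⟨x, y, hxy, heq⟩ := Finite.exists_ne_map_eq_of_infinite ψ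
  rcases hxy.lt_or_gt with h | h
  · refine ⟨g x, g y, g.strictMono h, hg x y h.le, ?_⟩
    ext n
    constructor
    · intro hn
      have hnK : n < K := by simpa using hf (g x) hn
      have : (⟨n, hnK⟩ : Fin K) ∈ ψ x := by simp [hψ, hn]
      rw [heq] at this
      simpa [hψ] using this
    · intro hn
      have hnK : n < K := by simpa using hf (g y) hn
      have : (⟨n, hnK⟩ : Fin K) ∈ ψ y := by simp [hψ, hn]
      rw [← heq] at this
      simpa [hψ] using this
  · refine ⟨g y, g x, g.strictMono h, hg y x h.le, ?_⟩
    ext n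
    constructor
    · intro hn
      have hnK : n < K := by simpa using hf (g y) hn
      have : (⟨n, hnK⟩ : Fin K) ∈ ψ y := by simp [hψ, hn]
      rw [← heq] at this
      simpa [hψ] using this
    · intro hn
      have hnK : n < K := by simpa using hf (g x) hn
      have : (⟨n, hnK⟩ : Fin K) ∈ ψ x := by simp [hψ, hn]
      rw [heq] at this
      simpa [hψ] using this

variable {V : Type*}

/-- The forest code `ts` encodes the labeled graph `(G, f)` with external adjacency `a`,
at depth offset `D`. -/
def EncF (ts : List (T (Q × Finset ℕ))) (D : ℕ) (G : SimpleGraph V) (f : V → Q)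
    (a : V → Finset ℕ) : Prop :=
  ∃ e : V → List ℕ,
    (∀ v, (labFA ts (e v)).isSome) ∧
    Function.Injective e ∧
    (∀ l, (labFA ts l).isSome → ∃ v, e v = l) ∧
    (∀ v, ∃ A : Finset ℕ, labFA ts (e v) = some (f v, A) ∧
      ∀ n, n ∈ A ↔ ((n ≤ D ∧ n ∈ a v) ∨
        ∃ w, e w <+: e v ∧ e w ≠ e v ∧ n = D + (e w).length ∧ G.Adj w v)) ∧
    (∀ v w, G.Adj v w → e v <+: e w ∨ e w <+: e v)

/-- Tree version: root at depth `D + 1`; tree addresses may be `[]` (the root). -/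
def EncT (t : T (Q × Finset ℕ)) (D : ℕ) (G : SimpleGraph V) (f : V → Q)
    (a : V → Finset ℕ) : Prop :=
  ∃ e : V → List ℕ,
    (∀ v, (labT t (e v)).isSome) ∧
    Function.Injective e ∧
    (∀ l, (labT t l).isSome → ∃ v, e v = l) ∧
    (∀ v, ∃ A : Finset ℕ, labT t (e v) = some (f v, A) ∧
      ∀ n, n ∈ A ↔ ((n ≤ D ∧ n ∈ a v) ∨
        ∃ w, e w <+: e v ∧ e w ≠ e v ∧ n = D + 1 + (e w).length ∧ G.Adj w v)) ∧
    (∀ v w, G.Adj v w → e v <+: e w ∨ e w <+: e v)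

theorem transfer {W : Type*} {G1 : SimpleGraph V} {G2 : SimpleGraph W}
    {f1 : V → Q} {f2 : W → Q} {a1 : V → Finset ℕ} {a2 : W → Finset ℕ}
    {ts us : List (T (Q × Finset ℕ))} {D : ℕ}
    (h1 : EncF ts D G1 f1 a1) (h2 : EncF us D G2 f2 a2)
    (hemb : List.SublistForall₂ (TE (rQ Q)) ts us) :
    ∃ σ : V → W, Function.Injective σ ∧
      (∀ u v, G1.Adj u v ↔ G2.Adj (σ u) (σ v)) ∧
      ∀ v, f1 v ≤ f2 (σ v) := by
  obtain ⟨e1, hv1, hi1, hs1, hL1, hA1⟩ := h1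
  obtain ⟨e2, hv2, hi2, hs2, hL2, hA2⟩ := h2
  obtain ⟨θ, hθ1, hθ2, hθ3, hθ4⟩ := emb_of_SF hemb
  choose A1 hA1lab hA1mem using hL1
  choose A2 hA2lab hA2mem using hL2
  have hσex : ∀ v : V, ∃ w : W, e2 w = θ (e1 v) := fun v => hs2 _ (hθ1 _ (hv1 v))
  choose σ hσ using hσex
  have hlen : ∀ v, (θ (e1 v)).length = (e1 v).length := fun v => hθ2 _ (hv1 v)
  have hpre : ∀ v w, e1 v <+: e1 w ↔ e2 (σ v) <+: e2 (σ w) := by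
    intro v w
    rw [hσ, hσ]
    exact hθ3 _ _ (hv1 v) (hv1 w)
  have hlab : ∀ v, rQ Q (f1 v, A1 v) (f2 (σ v), A2 (σ v)) := by
    intro v
    refine hθ4 (e1 v) _ _ (hA1lab v) ?_
    rw [← hσ]
    exact hA2lab (σ v)
  have hne1 : ∀ v, e1 v ≠ [] := fun v => labFA_addr_ne_nil (hv1 v)
  have hAeq : ∀ v, A1 v = A2 (σ v) := fun v => (hlab v).2
  have hfle : ∀ v, f1 v ≤ f2 (σ v) := fun v => (hlab v).1
  have hinj : Function.Injective σ := by
    intro v w h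
    apply hi1
    have h2 : θ (e1 v) = θ (e1 w) := by rw [← hσ, ← hσ, h]
    have hvw : e1 v <+: e1 w := by
      rw [hθ3 _ _ (hv1 v) (hv1 w), h2]
    have hwv : e1 w <+: e1 v := by
      rw [hθ3 _ _ (hv1 w) (hv1 v), h2]
    exact hvw.eq_of_length (le_antisymm hvw.length_le hwv.length_le)
  -- forward adjacency, directed version
  have hfwd : ∀ v w : V, G1.Adj v w → e1 v <+: e1 w → G2.Adj (σ v) (σ w) := by
    intro v w hadj hp
    have hnevw : e1 v ≠ e1 w := fun hc => G1.irrefl (hi1 hc ▸ hadj)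
    have hmem : D + (e1 v).length ∈ A1 w :=
      (hA1mem w (D + (e1 v).length)).mpr (Or.inr ⟨v, hp, hnevw, rfl, hadj⟩)
    have hmem2 : D + (e1 v).length ∈ A2 (σ w) := by rw [← hAeq]; exact hmem
    rcases (hA2mem (σ w) _).mp hmem2 with ⟨hle, _⟩ | ⟨w', hp', hne', hn', hadj'⟩
    · exfalso
      have : (e1 v).length ≥ 1 := by
        cases hc : e1 v with
        | nil => exact absurd hc (hne1 v)
        | cons _ _ => simp
      omega
    · -- w' = σ v
      have hlw' : (e2 w').length = (e2 (σ v)).length := by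
        rw [hσ, hlen]
        omega
      have hpv : e2 (σ v) <+: e2 (σ w) := (hpre v w).mp hp
      have : e2 w' = e2 (σ v) := by
        rcases List.prefix_or_prefix_of_prefix hp' hpv with h | h
        · exact h.eq_of_length (by omega)
        · exact (h.eq_of_length (by omega)).symm
      rw [hi2 this] at hadj'
      exact hadj'
  have hbwd : ∀ v w : V, G2.Adj (σ v) (σ w) → e2 (σ v) <+: e2 (σ w) → G1.Adj v w := by
    intro v w hadj hp
    have hne : e2 (σ v) ≠ e2 (σ w) := fun hc => G2.irrefl (hi2 hc ▸ hadj)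
    have hmem : D + (e2 (σ v)).length ∈ A2 (σ w) :=
      (hA2mem (σ w) _).mpr (Or.inr ⟨σ v, hp, hne, rfl, hadj⟩)
    have hmem1 : D + (e2 (σ v)).length ∈ A1 w := by rw [hAeq]; exact hmem
    have hlenv : (e2 (σ v)).length = (e1 v).length := by rw [hσ, hlen]
    rcases (hA1mem w _).mp hmem1 with ⟨hle, _⟩ | ⟨w', hp', hne', hn', hadj'⟩
    · exfalso
      have : (e1 v).length ≥ 1 := by
        cases hc : e1 v with
        | nil => exact absurd hc (hne1 v)
        | cons _ _ => simp
      omega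
    · have hpv : e1 v <+: e1 w := (hpre v w).mpr hp
      have : e1 w' = e1 v := by
        rcases List.prefix_or_prefix_of_prefix hp' hpv with h | h
        · exact h.eq_of_length (by omega)
        · exact (h.eq_of_length (by omega)).symm
      rw [hi1 this] at hadj'
      exact hadj'
  refine ⟨σ, hinj, ?_, hfle⟩
  intro v w
  constructor
  · intro hadj
    rcases hA1 v w hadj with hp | hp
    · exact hfwd v w hadj hp
    · exact (hfwd w v hadj.symm hp).symm
  · intro hadj
    rcases hA2 (σ v) (σ w) hadj with hp | hp
    · exact hbwd v w hadj hp
    · exact (hbwd w v hadj.symm hp).symm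

end PFW

namespace PFW
open T
section Helpers
variable {Q : Type} [Preorder Q] {V : Type*} {G : SimpleGraph V}

theorem labT_ne_nil_eq (x : Q × Finset ℕ) (ts : List (T (Q × Finset ℕ))) {l : List ℕ}
    (h : l ≠ []) : labT (T.node x ts) l = labFA ts l := by
  cases l with
  | nil => exact absurd rfl h
  | cons i m => rfl

theorem reachable_induce {s : Set V} :
    ∀ {u v : V} (p : G.Walk u v), (∀ x ∈ p.support, x ∈ s) →
      ∀ (hu : u ∈ s) (hv : v ∈ s), (G.induce s).Reachable ⟨u, hu⟩ ⟨v, hv⟩ := by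
  intro u v p
  induction p with
  | nil => intro _ hu hv; exact Reachable.refl _
  | @cons u w v hadj q ih =>
      intro hsup hu hv
      have hw : w ∈ s := hsup w (by simp [Walk.support_cons])
      have h1 : (G.induce s).Adj ⟨u, hu⟩ ⟨w, hw⟩ := by
        simp only [comap_adj, Function.Embedding.coe_subtype]
        exact hadj
      exact (h1.reachable).trans (ih (fun x hx => hsup x (by simp [Walk.support_cons, hx])) hw hv)

theorem reachable_of_mem_support [DecidableEq V] {u v x : V} (p : G.Walk u v) (hx : x ∈ p.support) :
    G.Reachable u x := ⟨p.takeUntil x hx⟩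

theorem getVert_ne_of_path : ∀ {u v : V} (p : G.Walk u v), p.IsPath →
    ∀ i j : ℕ, i < j → j ≤ p.length → p.getVert i ≠ p.getVert j := by
  intro u v p
  induction p with
  | nil => intro _ i j hij hj; simp at hj; omega
  | @cons u w v hadj q ih =>
      intro hp i j hij hj
      rw [Walk.cons_isPath_iff] at hp
      cases i with
      | zero =>
          obtain ⟨j', rfl⟩ : ∃ j', j = j' + 1 := ⟨j - 1, by omega⟩
          rw [Walk.getVert_zero, Walk.getVert_cons_succ]
          intro hc
          exact hp.2 (Walk.mem_support_iff_exists_getVert.mpr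
            ⟨j', hc.symm, by simpa [Walk.length_cons] using hj⟩)
      | succ i' =>
          obtain ⟨j', rfl⟩ : ∃ j', j = j' + 1 := ⟨j - 1, by omega⟩
          rw [Walk.getVert_cons_succ, Walk.getVert_cons_succ]
          exact ih hp.1 i' j' (by omega) (by simpa [Walk.length_cons] using hj)

end Helpers
end PFW

namespace PFW
open T

variable {Q : Type} [Preorder Q]

theorem encode (K : ℕ) : ∀ (N : ℕ) (V : Type) [Fintype V] (G : SimpleGraph V)
    (f : V → Q) (a : V → Finset ℕ) (D b : ℕ),
    (∀ v : V, ∀ n ∈ a v, n ≤ D) → (∀ v : V, a v ⊆ Finset.range K) → D + b ≤ K →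
    ((2 * Fintype.card V + 1 ≤ N →
      (∀ v : V, ∃ r : V, G.Reachable r v ∧
        ∀ (w : V) (p : G.Walk r w), p.IsPath → p.length < b) →
      ∃ ts : List (T (Q × Finset ℕ)), (∀ t ∈ ts, Bd (sK Q K) b t) ∧ EncF ts D G f a)
    ∧ (2 * Fintype.card V ≤ N →
      ∀ r : V, (∀ v : V, G.Reachable r v) →
        (∀ (w : V) (p : G.Walk r w), p.IsPath → p.length < b) →
      ∃ t : T (Q × Finset ℕ), Bd (sK Q K) b t ∧ EncT t D G f a)) := by
  intro N
  induction N using Nat.strong_induction_on with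
  | _ N IH =>
  intro V _ G f a D b haD haK hDb
  constructor
  · -- forest part
    intro hN hb
    classical
    rcases isEmpty_or_nonempty V with hE | hNE
    · refine ⟨[], by simp, fun v => isEmptyElim v, fun v => isEmptyElim v,
        fun v w => isEmptyElim v, ?_, fun v => isEmptyElim v, fun v => isEmptyElim v⟩
      intro l hl
      rw [labFA_nil] at hl
      simp at hl
    · obtain ⟨v0⟩ := hNE
      obtain ⟨r, hrre, hrpath⟩ := hb v0
      set A : Set V := {v | G.Reachable r v} with hA
      set B : Set V := {v | ¬ G.Reachable r v} with hB
      have hrA : r ∈ A := Reachable.refl r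
      have hcardB : Fintype.card ↥B < Fintype.card V := by
        apply Fintype.card_subtype_lt (x := r)
        simp only [hB, Set.mem_setOf_eq, not_not]
        exact Reachable.refl r
      have hcardA : Fintype.card ↥A ≤ Fintype.card V :=
        Fintype.card_le_of_injective Subtype.val Subtype.val_injective
      -- tree call on the component A
      obtain ⟨_, hT⟩ := IH (2 * Fintype.card ↥A) (by omega) ↥A (G.induce A)
        (fun v => f v.1) (fun v => a v.1) D b
        (fun v n hn => haD v.1 n hn) (fun v => haK v.1) hDb
      obtain ⟨t, hBdT, eT, hvT, hiT, hsT, hLT, hAT⟩ := hT le_rfl ⟨r, hrA⟩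
        (by
          intro v
          obtain ⟨p, hp⟩ : ∃ p : G.Walk r v.1, p.IsPath :=
            (v.2 : G.Reachable r v.1).elim_path fun q => ⟨q.1, q.2⟩
          have hsup : ∀ x ∈ p.support, x ∈ A := fun x hx => reachable_of_mem_support p hx
          exact reachable_induce p hsup hrA v.2)
        (by
          intro w p' hp'
          have hmapPath : (p'.map (SimpleGraph.Embedding.induce A).toHom).IsPath :=
            Walk.map_isPath_of_injective Subtype.val_injective hp'
          have := hrpath _ _ hmapPath
          exact lt_of_eq_of_lt (Walk.length_map ..).symm this)
      -- forest call on the rest B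
      obtain ⟨hFB, _⟩ := IH (2 * Fintype.card ↥B + 1) (by omega) ↥B (G.induce B)
        (fun v => f v.1) (fun v => a v.1) D b
        (fun v n hn => haD v.1 n hn) (fun v => haK v.1) hDb
      obtain ⟨ts', hBd', eB, hvB, hiB, hsB, hLB, hAB⟩ := hFB le_rfl
        (by
          intro v
          obtain ⟨r', hre', hpath'⟩ := hb v.1
          have hr'B : r' ∈ B := fun hc => v.2 (hc.trans hre')
          obtain ⟨p, hp⟩ : ∃ p : G.Walk r' v.1, p.IsPath :=
            hre'.elim_path fun q => ⟨q.1, q.2⟩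
          have hsup : ∀ x ∈ p.support, x ∈ B := by
            intro x hx hc
            exact v.2 (hc.trans ⟨p.dropUntil x hx⟩)
          refine ⟨⟨r', hr'B⟩, reachable_induce p hsup hr'B v.2, ?_⟩
          intro w p' hp'
          have hmapPath : (p'.map (SimpleGraph.Embedding.induce B).toHom).IsPath :=
            Walk.map_isPath_of_injective Subtype.val_injective hp'
          have := hpath' _ _ hmapPath
          exact lt_of_eq_of_lt (Walk.length_map ..).symm this)
      -- assemble
      refine ⟨t :: ts', ?_, ?_⟩
      · intro u hu
        rcases List.mem_cons.mp hu with rfl | hu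
        · exact hBdT
        · exact hBd' u hu
      · set e : V → List ℕ := fun v =>
          if h : G.Reachable r v then 0 :: eT ⟨v, h⟩ else shiftHead (eB ⟨v, h⟩) with he
        have he_A : ∀ (v : V) (h : G.Reachable r v), e v = 0 :: eT ⟨v, h⟩ := by
          intro v h; rw [he]; exact dif_pos h
        have he_B : ∀ (v : V) (h : ¬ G.Reachable r v), e v = shiftHead (eB ⟨v, h⟩) := by
          intro v h; rw [he]; exact dif_neg h
        have hBcons : ∀ w : ↥B, ∃ i m, eB w = i :: m := fun w => exists_cons_of_valid (hvB w)
        have hcross : ∀ v w : V, G.Adj v w → G.Reachable r v → G.Reachable r w :=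
          fun v w hadj h => h.trans hadj.reachable
        refine ⟨e, ?_, ?_, ?_, ?_, ?_⟩
        · intro v
          by_cases h : G.Reachable r v
          · rw [he_A v h, labFA_cons_zero]
            exact hvT ⟨v, h⟩
          · obtain ⟨i, m, him⟩ := hBcons ⟨v, h⟩
            rw [he_B v h, him, shiftHead_cons, labFA_cons_succ, ← him]
            exact hvB ⟨v, h⟩
        · intro v w hvw
          by_cases h : G.Reachable r v <;> by_cases h' : G.Reachable r w
          · rw [he_A v h, he_A w h'] at hvw
            exact congrArg Subtype.val (hiT (List.cons_injective hvw))
          · obtain ⟨i, m, him⟩ := hBcons ⟨w, h'⟩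
            rw [he_A v h, he_B w h', him, shiftHead_cons] at hvw
            exact absurd (List.head_eq_of_cons_eq hvw) (by omega)
          · obtain ⟨i, m, him⟩ := hBcons ⟨v, h⟩
            rw [he_B v h, he_A w h', him, shiftHead_cons] at hvw
            exact absurd (List.head_eq_of_cons_eq hvw) (by omega)
          · obtain ⟨i, m, him⟩ := hBcons ⟨v, h⟩
            obtain ⟨i', m', him'⟩ := hBcons ⟨w, h'⟩
            rw [he_B v h, he_B w h', him, him', shiftHead_cons, shiftHead_cons] at hvw
            have h1 : i = i' := by
              have := List.head_eq_of_cons_eq hvw; omega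
            have h2 : m = m' := List.tail_eq_of_cons_eq hvw
            have : eB ⟨v, h⟩ = eB ⟨w, h'⟩ := by rw [him, him', h1, h2]
            exact congrArg Subtype.val (hiB this)
        · intro l hl
          match l with
          | [] => simp at hl
          | 0 :: m =>
            rw [labFA_cons_zero] at hl
            obtain ⟨vT, hveq⟩ := hsT _ hl
            refine ⟨vT.1, ?_⟩
            rw [he_A vT.1 vT.2, Subtype.eta]
            rw [hveq]
          | (i + 1) :: m =>
            rw [labFA_cons_succ] at hl
            obtain ⟨vB, hveq⟩ := hsB _ hl
            refine ⟨vB.1, ?_⟩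
            rw [he_B vB.1 vB.2, Subtype.eta, hveq, shiftHead_cons]
        · intro v
          by_cases h : G.Reachable r v
          · obtain ⟨AT, hATlab, hATmem⟩ := hLT ⟨v, h⟩
            refine ⟨AT, ?_, ?_⟩
            · rw [he_A v h, labFA_cons_zero]
              exact hATlab
            · intro n
              rw [hATmem n]
              constructor
              · rintro (⟨hle, hmem⟩ | ⟨w', hpre, hne, hn, hadj⟩)
                · exact Or.inl ⟨hle, hmem⟩
                · refine Or.inr ⟨w'.1, ?_⟩
                  rw [he_A w'.1 w'.2, he_A v h, Subtype.eta]
                  refine ⟨?_, ?_, ?_, ?_⟩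
                  · rw [List.cons_prefix_cons]; exact ⟨rfl, hpre⟩
                  · intro hc; exact hne (List.tail_eq_of_cons_eq hc)
                  · simp only [List.length_cons]; omega
                  · simpa using hadj
              · rintro (⟨hle, hmem⟩ | ⟨w, hpre, hne, hn, hadj⟩)
                · exact Or.inl ⟨hle, hmem⟩
                · have hw : G.Reachable r w := hcross v w hadj.symm h
                  refine Or.inr ⟨⟨w, hw⟩, ?_, ?_, ?_, ?_⟩
                  · rw [he_A w hw, he_A v h] at hpre
                    exact (List.cons_prefix_cons.mp hpre).2
                  · intro hc
                    apply hne
                    rw [he_A w hw, he_A v h, hc]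
                  · rw [he_A w hw] at hn
                    simp only [List.length_cons] at hn; omega
                  · simpa using hadj
          · obtain ⟨AB, hABlab, hABmem⟩ := hLB ⟨v, h⟩
            obtain ⟨i, m, him⟩ := hBcons ⟨v, h⟩
            refine ⟨AB, ?_, ?_⟩
            · rw [he_B v h, him, shiftHead_cons, labFA_cons_succ, ← him]
              exact hABlab
            · intro n
              rw [hABmem n]
              constructor
              · rintro (⟨hle, hmem⟩ | ⟨w', hpre, hne, hn, hadj⟩)
                · exact Or.inl ⟨hle, hmem⟩
                · refine Or.inr ⟨w'.1, ?_⟩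
                  rw [he_B w'.1 w'.2, he_B v h, Subtype.eta]
                  obtain ⟨i', m', him'⟩ := hBcons w'
                  refine ⟨?_, ?_, ?_, ?_⟩
                  · rw [shiftHead_prefix_iff (by rw [him']; simp) (by rw [him]; simp)]
                    exact hpre
                  · intro hc
                    apply hne
                    rw [him', him] at hc ⊢
                    simp only [shiftHead_cons] at hc
                    obtain ⟨h1, h2⟩ := List.cons_eq_cons.mp hc
                    rw [h2]
                    congr 1
                    omega
                  · rw [shiftHead_length]; exact hn
                  · simpa using hadj
              · rintro (⟨hle, hmem⟩ | ⟨w, hpre, hne, hn, hadj⟩)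
                · exact Or.inl ⟨hle, hmem⟩
                · have hw : ¬ G.Reachable r w := by
                    intro hc
                    exact h (hcross w v hadj hc)
                  refine Or.inr ⟨⟨w, hw⟩, ?_, ?_, ?_, ?_⟩
                  · rw [he_B w hw, he_B v h] at hpre
                    obtain ⟨i', m', him'⟩ := hBcons ⟨w, hw⟩
                    rwa [shiftHead_prefix_iff (by rw [him']; simp) (by rw [him]; simp)] at hpre
                  · intro hc
                    apply hne
                    rw [he_B w hw, he_B v h, hc]
                  · rw [he_B w hw, shiftHead_length] at hn
                    exact hn
                  · simpa using hadj
        · intro v w hadj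
          by_cases h : G.Reachable r v
          · have h' : G.Reachable r w := hcross v w hadj h
            rw [he_A v h, he_A w h']
            rcases hAT ⟨v, h⟩ ⟨w, h'⟩ (by simpa using hadj) with hp | hp
            · exact Or.inl (by rw [List.cons_prefix_cons]; exact ⟨rfl, hp⟩)
            · exact Or.inr (by rw [List.cons_prefix_cons]; exact ⟨rfl, hp⟩)
          · have h' : ¬ G.Reachable r w := fun hc => h (hcross w v hadj.symm hc)
            rw [he_B v h, he_B w h']
            obtain ⟨i, m, him⟩ := hBcons ⟨v, h⟩
            obtain ⟨i', m', him'⟩ := hBcons ⟨w, h'⟩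
            rcases hAB ⟨v, h⟩ ⟨w, h'⟩ (by simpa using hadj) with hp | hp
            · exact Or.inl (by
                rw [shiftHead_prefix_iff (by rw [him]; simp) (by rw [him']; simp)]
                exact hp)
            · exact Or.inr (by
                rw [shiftHead_prefix_iff (by rw [him']; simp) (by rw [him]; simp)]
                exact hp)
  · -- tree part
    intro hN r hreach hpath
    classical
    have hb1 : 1 ≤ b := by
      have := hpath r Walk.nil Walk.IsPath.nil
      simp at this; omega
    set s : Set V := {v | v ≠ r} with hs
    have hcard : Fintype.card ↥s < Fintype.card V := by
      apply Fintype.card_subtype_lt (x := r)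
      simp [hs]
    -- recursive forest call on V minus r
    obtain ⟨hF, _⟩ := IH (2 * Fintype.card ↥s + 1) (by omega) ↥s (G.induce s)
      (fun v => f v.1)
      (fun v => if G.Adj r v.1 then insert (D + 1) (a v.1) else a v.1)
      (D + 1) (b - 1)
      (by
        intro v n hn
        by_cases hA : G.Adj r v.1 <;> simp [hA] at hn
        · rcases hn with rfl | hn
          · omega
          · exact le_trans (haD v.1 n hn) (by omega)
        · exact le_trans (haD v.1 n hn) (by omega))
      (by
        intro v n hn
        -- need D + 2 ≤ K when s is nonempty; derive from a path to v.1
        have hvne : v.1 ≠ r := v.2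
        obtain ⟨p, hp⟩ : ∃ p : G.Walk r v.1, p.IsPath := (hreach v.1).elim_path fun q => ⟨q.1, q.2⟩
        have hlen : 1 ≤ p.length := by
          rcases Nat.eq_zero_or_pos p.length with h0 | h1
          · exact absurd (by simpa using (Walk.eq_of_length_eq_zero h0)) (Ne.symm hvne)
          · exact h1
        have hb2 : 2 ≤ b := by have := hpath v.1 p hp; omega
        by_cases hA : G.Adj r v.1 <;> simp [hA] at hn
        · rcases hn with rfl | hn
          · simp; omega
          · exact haK v.1 hn
        · exact haK v.1 hn)
      (by omega)
    obtain ⟨ts, hBd, e', hv', hi', hs', hL', hA'⟩ := hF (by omega) (by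
      -- per-component roots in G.induce s
      intro v
      obtain ⟨p, hp⟩ : ∃ p : G.Walk r v.1, p.IsPath := (hreach v.1).elim_path fun q => ⟨q.1, q.2⟩
      have hvne : v.1 ≠ r := v.2
      have hnn : ¬ p.Nil := fun hnil =>
        hvne (Walk.eq_of_length_eq_zero (Walk.nil_iff_length_eq.mp hnil)).symm
      obtain ⟨y, hadj, q, rfl⟩ := Walk.not_nil_iff.mp hnn
      · rw [Walk.cons_isPath_iff] at hp
        have hy : y ∈ s := by
          simp only [hs, Set.mem_setOf_eq]
          intro hc
          exact hp.2 (hc ▸ q.start_mem_support)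
        have hqs : ∀ x ∈ q.support, x ∈ s := by
          intro x hx hc
          exact hp.2 (hc ▸ hx)
        refine ⟨⟨y, hy⟩, reachable_induce q hqs hy v.2, ?_⟩
        intro w p' hp'
        have hmap := p'.map (SimpleGraph.Embedding.induce s).toHom
        have hmapPath : (p'.map (SimpleGraph.Embedding.induce s).toHom).IsPath :=
          Walk.map_isPath_of_injective (Subtype.val_injective) hp'
        have hrns : r ∉ (p'.map (SimpleGraph.Embedding.induce s).toHom).support := by
          intro hc
          rw [Walk.support_map] at hc
          obtain ⟨x, hx, hxx⟩ := List.mem_map.mp hc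
          exact x.2 hxx
        have hcons : (Walk.cons hadj (p'.map (SimpleGraph.Embedding.induce s).toHom)).IsPath := by
          exact Walk.IsPath.cons hmapPath hrns
        have := hpath _ _ hcons
        have h3 : (Walk.cons hadj (p'.map (SimpleGraph.Embedding.induce s).toHom)).length = p'.length + 1 :=
          (Walk.length_cons _ _).trans (congrArg (· + 1) (Walk.length_map ..))
        rw [h3] at this
        omega)
    -- assemble the tree
    refine ⟨T.node (f r, a r) ts, ?_, ?_⟩
    · have : b = (b - 1) + 1 := by omega
      rw [this]
      exact Bd.node (haK r) hBd
    · -- EncT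
      set e : V → List ℕ := fun v => if h : v = r then [] else e' ⟨v, h⟩ with he
      have he_r : e r = [] := by rw [he]; exact dif_pos rfl
      have he_ne : ∀ (v : V) (h : v ≠ r), e v = e' ⟨v, h⟩ := by
        intro v h; rw [he]; exact dif_neg h
      refine ⟨e, ?_, ?_, ?_, ?_, ?_⟩
      · intro v
        by_cases h : v = r
        · subst h; rw [he_r]; simp
        · rw [he_ne v h, labT_ne_nil_eq _ _ (labFA_addr_ne_nil (hv' ⟨v, h⟩))]
          exact hv' ⟨v, h⟩
      · intro v w hvw
        by_cases h : v = r <;> by_cases h' : w = r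
        · rw [h, h']
        · subst h
          rw [he_r, he_ne w h'] at hvw
          exact absurd hvw.symm (labFA_addr_ne_nil (hv' ⟨w, h'⟩))
        · subst h'
          rw [he_r, he_ne v h] at hvw
          exact absurd hvw (labFA_addr_ne_nil (hv' ⟨v, h⟩))
        · rw [he_ne v h, he_ne w h'] at hvw
          exact congrArg Subtype.val (hi' hvw)
      · intro l hl
        cases l with
        | nil => exact ⟨r, he_r⟩
        | cons i m =>
          rw [labT_node_cons] at hl
          obtain ⟨v', hv'eq⟩ := hs' _ hl
          refine ⟨v'.1, ?_⟩
          rw [he_ne v'.1 v'.2, Subtype.eta]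
          exact hv'eq
      · intro v
        by_cases h : v = r
        · subst h
          refine ⟨a v, by rw [he_r]; simp, ?_⟩
          intro n
          constructor
          · intro hn
            exact Or.inl ⟨haD v n hn, hn⟩
          · rintro (⟨_, hn⟩ | ⟨w, hpre, hne, _, _⟩)
            · exact hn
            · rw [he_r] at hpre hne
              exact absurd (List.prefix_nil.mp hpre) hne
        · obtain ⟨A, hAlab, hAmem⟩ := hL' ⟨v, h⟩
          refine ⟨A, ?_, ?_⟩
          · rw [he_ne v h, labT_ne_nil_eq _ _ (labFA_addr_ne_nil (hv' ⟨v, h⟩))]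
            exact hAlab
          · intro n
            rw [hAmem n]
            constructor
            · rintro (⟨hle, hmem⟩ | ⟨w', hpre, hne, hn, hadj⟩)
              · by_cases hA : G.Adj r v <;> simp [hA] at hmem
                · rcases hmem with rfl | hmem
                  · -- n = D+1, witness w = r
                    refine Or.inr ⟨r, ?_⟩
                    rw [he_r, he_ne v h]
                    refine ⟨List.nil_prefix, ?_, by simp, hA⟩
                    intro hc
                    exact labFA_addr_ne_nil (hv' ⟨v, h⟩) hc.symm
                  · exact Or.inl ⟨haD v n hmem, hmem⟩
                · exact Or.inl ⟨haD v n hmem, hmem⟩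
              · refine Or.inr ⟨w'.1, ?_⟩
                rw [he_ne w'.1 w'.2, he_ne v h, Subtype.eta]
                refine ⟨hpre, hne, hn, ?_⟩
                simpa using hadj
            · rintro (⟨hle, hmem⟩ | ⟨w, hpre, hne, hn, hadj⟩)
              · refine Or.inl ⟨by omega, ?_⟩
                by_cases hA : G.Adj r v <;> simp [hA]
                · exact Or.inr hmem
                · exact hmem
              · by_cases hw : w = r
                · subst hw
                  rw [he_r] at hpre hne hn
                  refine Or.inl ⟨by simp at hn; omega, ?_⟩
                  simp only [List.length_nil, Nat.add_zero] at hn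
                  simp [hadj, hn]
                · rw [he_ne w hw] at hpre hne hn
                  rw [he_ne v h] at hpre hne
                  refine Or.inr ⟨⟨w, hw⟩, hpre, hne, hn, ?_⟩
                  simpa using hadj
      · intro v w hadj
        by_cases h : v = r
        · subst h
          rw [he_r]
          exact Or.inl (List.nil_prefix)
        · by_cases h' : w = r
          · subst h'
            rw [he_r]
            exact Or.inr (List.nil_prefix)
          · rw [he_ne v h, he_ne w h']
            exact hA' ⟨v, h⟩ ⟨w, h'⟩ (by simpa using hadj)
end PFW

open SimpleGraph

/-- `H` occurs as a subgraph of `G`: an injective map sending edges to edges. -/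
def ContainsSubgraph {W V : Type*} (H : SimpleGraph W) (G : SimpleGraph V) : Prop :=
  ∃ σ : W → V, Function.Injective σ ∧ ∀ ⦃u v⦄, H.Adj u v → G.Adj (σ u) (σ v)

theorem labeled_path_free_graphs_wqo
    (k : ℕ) (hk : 1 ≤ k) (Q : Type) [Preorder Q]
    (hwqo : ∀ q : ℕ → Q, ∃ i j : ℕ, i < j ∧ q i ≤ q j)
    (V : ℕ → Type) [∀ n, Fintype (V n)] (G : ∀ n, SimpleGraph (V n))
    (hfree : ∀ n, ¬ ContainsSubgraph (pathGraph k) (G n))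
    (f : ∀ n, V n → Q) :
    ∃ i j : ℕ, i < j ∧ ∃ σ : V i → V j, Function.Injective σ ∧
      (∀ u v, (G i).Adj u v ↔ (G j).Adj (σ u) (σ v)) ∧
      ∀ v, f i v ≤ f j (σ v) := by
  classical
  have hpb : ∀ n (u w : V n) (p : (G n).Walk u w), p.IsPath → p.length < k - 1 := by
    intro n u w p hp
    by_contra hc
    push_neg at hc
    apply hfree n
    refine ⟨fun i => p.getVert i.1, ?_, ?_⟩
    · intro i j hij
      by_contra hne
      have hne' : (i : ℕ) ≠ (j : ℕ) := fun hcc => hne (Fin.ext hcc)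
      rcases hne'.lt_or_gt with h | h
      · exact PFW.getVert_ne_of_path p hp i.1 j.1 h
          (le_trans (by omega) hc) hij
      · exact PFW.getVert_ne_of_path p hp j.1 i.1 h
          (le_trans (by omega) hc) hij.symm
    · intro u' v' hadj
      rw [pathGraph_adj] at hadj
      rcases hadj with h | h
      · have hlt : (u' : ℕ) < p.length := by
          have : (v' : ℕ) < k := v'.isLt
          omega
        have := p.adj_getVert_succ hlt
        rwa [show (u' : ℕ) + 1 = (v' : ℕ) from h] at this
      · have hlt : (v' : ℕ) < p.length := by
          have : (u' : ℕ) < k := u'.isLt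
          omega
        have := p.adj_getVert_succ hlt
        rw [show (v' : ℕ) + 1 = (u' : ℕ) from h] at this
        exact this.symm
  have henc : ∀ n, ∃ ts : List (PFW.T (Q × Finset ℕ)),
      (∀ t ∈ ts, PFW.T.Bd (PFW.sK Q k) (k - 1) t) ∧
      PFW.EncF ts 0 (G n) (f n) (fun _ => ∅) := by
    intro n
    obtain ⟨h1, _⟩ := PFW.encode (Q := Q) k (2 * Fintype.card (V n) + 1) (V n) (G n) (f n)
      (fun _ => ∅) 0 (k - 1) (by simp) (by simp) (by omega)
    exact h1 le_rfl (fun v => ⟨v, Reachable.refl v, fun w p hp => hpb n v w p hp⟩)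
  choose c hc1 hc2 using henc
  haveI : IsRefl (Q × Finset ℕ) (PFW.rQ Q) := ⟨PFW.rQ_refl⟩
  haveI : IsTrans (Q × Finset ℕ) (PFW.rQ Q) := ⟨fun a b d => PFW.rQ_trans a b d⟩
  haveI : IsRefl (PFW.T (Q × Finset ℕ)) (PFW.T.TE (PFW.rQ Q)) := ⟨PFW.T.TE_refl PFW.rQ_refl⟩
  haveI : IsTrans (PFW.T (Q × Finset ℕ)) (PFW.T.TE (PFW.rQ Q)) :=
    ⟨fun _ _ _ => PFW.T.TE_trans PFW.rQ_trans⟩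
  haveI : IsPreorder (PFW.T (Q × Finset ℕ)) (PFW.T.TE (PFW.rQ Q)) :=
    { refl := PFW.T.TE_refl PFW.rQ_refl, trans := fun _ _ _ => PFW.T.TE_trans PFW.rQ_trans }
  have hpwoT := PFW.T.pwo_Bd (PFW.rQ_refl) (PFW.rQ_trans) (PFW.pwo_sK hwqo k) (k - 1)
  have hL := hpwoT.partiallyWellOrderedOn_sublistForall₂
  obtain ⟨i, j, hij, hemb⟩ := hL.exists_lt (f := c) (fun n t ht => hc1 n t ht)
  obtain ⟨σ, hinj, hiff, hle⟩ := PFW.transfer (hc2 i) (hc2 j) hemb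
  exact ⟨i, j, hij, σ, hinj, hiff, hle⟩
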